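/- arXiv:2105.11177 — 2 statements merged into one kernel-verified Lean document; each statement's English description precedes it below -/
import Mathlib

section
/- Fix $h > 0$ and positive reals $\sigma_0, \sigma_1$. The function $\tilde F(p) = -p + \frac{p^{-2h}\sigma_1^{2h}}{(1-p)^{-2h}\sigma_0^{2h} + p^{-2h}\sigma_1^{2h}}$ is strictly decreasing on $(0,1)$ and has the unique root $p = \rho_1 := \sigma_1^{2h/(2h+1)}/(\sigma_0^{2h/(2h+1)} + \sigma_1^{2h/(2h+1)})$. -/
open Real Set

lemma rpow_left_inj' {u v c : ℝ} (hu : 0 ≤ u) (hv : 0 ≤ v) (hc : 0 < c) :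
    u ^ c = v ^ c ↔ u = v := by
  constructor
  · intro H
    have h1 : (u ^ c) ^ (1/c) = (v ^ c) ^ (1/c) := by rw [H]
    rwa [← Real.rpow_mul hu, ← Real.rpow_mul hv, mul_one_div_cancel hc.ne',
      Real.rpow_one, Real.rpow_one] at h1
  · rintro rfl; rfl

theorem stmt_5 (h σ0 σ1 : ℝ) (hh : 0 < h) (h0 : 0 < σ0) (h1 : 0 < σ1) :
    StrictAntiOn (fun p : ℝ => -p + p ^ (-(2*h)) * σ1 ^ (2*h) /
        ((1 - p) ^ (-(2*h)) * σ0 ^ (2*h) + p ^ (-(2*h)) * σ1 ^ (2*h))) (Set.Ioo 0 1) ∧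
    ∀ p ∈ Set.Ioo (0:ℝ) 1,
      (-p + p ^ (-(2*h)) * σ1 ^ (2*h) /
          ((1 - p) ^ (-(2*h)) * σ0 ^ (2*h) + p ^ (-(2*h)) * σ1 ^ (2*h)) = 0 ↔
        p = σ1 ^ (2*h/(2*h+1)) / (σ0 ^ (2*h/(2*h+1)) + σ1 ^ (2*h/(2*h+1)))) := by
  have h2 : (0:ℝ) < 2*h := by linarith
  have h21 : (0:ℝ) < 2*h+1 := by linarith
  have hS0 : 0 < σ0 ^ (2*h) := Real.rpow_pos_of_pos h0 _
  have hS1 : 0 < σ1 ^ (2*h) := Real.rpow_pos_of_pos h1 _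
  have key : ∀ p : ℝ, 0 < p → p < 1 →
      p ^ (-(2*h)) * σ1 ^ (2*h) /
        ((1 - p) ^ (-(2*h)) * σ0 ^ (2*h) + p ^ (-(2*h)) * σ1 ^ (2*h)) =
      ((p/(1-p)) ^ (2*h) * (σ0 ^ (2*h) / σ1 ^ (2*h)) + 1)⁻¹ := by
    intro p hp0 hp1
    have h1p : (0:ℝ) < 1 - p := by linarith
    have hP : 0 < p ^ (2*h) := Real.rpow_pos_of_pos hp0 _
    have hQ : 0 < (1-p) ^ (2*h) := Real.rpow_pos_of_pos h1p _
    rw [Real.rpow_neg hp0.le, Real.rpow_neg h1p.le, Real.div_rpow hp0.le h1p.le]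
    rw [eq_comm, inv_eq_iff_eq_inv, eq_comm]
    field_simp
  constructor
  · intro x hx y hy hxy
    obtain ⟨hx0, hx1⟩ := hx
    obtain ⟨hy0, hy1⟩ := hy
    have h1x : (0:ℝ) < 1 - x := by linarith
    have h1y : (0:ℝ) < 1 - y := by linarith
    simp only []
    rw [key x hx0 hx1, key y hy0 hy1]
    have hdiv : x/(1-x) < y/(1-y) := by
      rw [div_lt_div_iff₀ h1x h1y]; nlinarith
    have hr : (x/(1-x)) ^ (2*h) < (y/(1-y)) ^ (2*h) :=
      Real.rpow_lt_rpow (div_nonneg hx0.le h1x.le) hdiv h2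
    have hc : 0 < σ0 ^ (2*h) / σ1 ^ (2*h) := div_pos hS0 hS1
    have hrr : (x/(1-x)) ^ (2*h) * (σ0 ^ (2*h) / σ1 ^ (2*h))
        < (y/(1-y)) ^ (2*h) * (σ0 ^ (2*h) / σ1 ^ (2*h)) :=
      mul_lt_mul_of_pos_right hr hc
    have hpos : 0 < (x/(1-x)) ^ (2*h) * (σ0 ^ (2*h) / σ1 ^ (2*h)) + 1 := by positivity
    have hinv : ((y/(1-y)) ^ (2*h) * (σ0 ^ (2*h) / σ1 ^ (2*h)) + 1)⁻¹
        < ((x/(1-x)) ^ (2*h) * (σ0 ^ (2*h) / σ1 ^ (2*h)) + 1)⁻¹ := by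
      apply inv_strictAnti₀ hpos
      linarith
    linarith
  · intro p hp
    obtain ⟨hp0, hp1⟩ := hp
    have h1p : (0:ℝ) < 1 - p := by linarith
    have hP : 0 < p ^ (2*h) := Real.rpow_pos_of_pos hp0 _
    have hQ : 0 < (1-p) ^ (2*h) := Real.rpow_pos_of_pos h1p _
    have hT0 : 0 < σ0 ^ (2*h/(2*h+1)) := Real.rpow_pos_of_pos h0 _
    have hT1 : 0 < σ1 ^ (2*h/(2*h+1)) := Real.rpow_pos_of_pos h1 _
    have hA : 0 < (1-p) ^ (-(2*h)) * σ0 ^ (2*h) :=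
      mul_pos (Real.rpow_pos_of_pos h1p _) hS0
    have hB : 0 < p ^ (-(2*h)) * σ1 ^ (2*h) :=
      mul_pos (Real.rpow_pos_of_pos hp0 _) hS1
    have hAB : 0 < (1-p) ^ (-(2*h)) * σ0 ^ (2*h) + p ^ (-(2*h)) * σ1 ^ (2*h) := by linarith
    -- step 1: F p = 0 ↔ (1-p)*B = p*A
    have step1 : (-p + p ^ (-(2*h)) * σ1 ^ (2*h) /
          ((1 - p) ^ (-(2*h)) * σ0 ^ (2*h) + p ^ (-(2*h)) * σ1 ^ (2*h)) = 0) ↔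
        (1-p) * (p ^ (-(2*h)) * σ1 ^ (2*h)) = p * ((1-p) ^ (-(2*h)) * σ0 ^ (2*h)) := by
      constructor
      · intro H
        have H2 : p ^ (-(2*h)) * σ1 ^ (2*h) /
            ((1 - p) ^ (-(2*h)) * σ0 ^ (2*h) + p ^ (-(2*h)) * σ1 ^ (2*h)) = p := by linarith
        rw [div_eq_iff hAB.ne'] at H2
        linear_combination H2
      · intro H
        have H2 : p ^ (-(2*h)) * σ1 ^ (2*h) /
            ((1 - p) ^ (-(2*h)) * σ0 ^ (2*h) + p ^ (-(2*h)) * σ1 ^ (2*h)) = p := by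
          rw [div_eq_iff hAB.ne']
          linear_combination H
        linarith
    -- step 3: to power form
    have eL : ((1-p) * σ1 ^ (2*h/(2*h+1))) ^ (2*h+1) = (1-p) ^ (2*h+1) * σ1 ^ (2*h) := by
      rw [Real.mul_rpow h1p.le (Real.rpow_nonneg h1.le _), ← Real.rpow_mul h1.le,
        div_mul_cancel₀ _ h21.ne']
    have eR : (p * σ0 ^ (2*h/(2*h+1))) ^ (2*h+1) = p ^ (2*h+1) * σ0 ^ (2*h) := by
      rw [Real.mul_rpow hp0.le (Real.rpow_nonneg h0.le _), ← Real.rpow_mul h0.le,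
        div_mul_cancel₀ _ h21.ne']
    have e1 : (1-p) ^ (2*h+1) = (1-p) ^ (2*h) * (1-p) := by
      rw [Real.rpow_add h1p, Real.rpow_one]
    have e2 : p ^ (2*h+1) = p ^ (2*h) * p := by
      rw [Real.rpow_add hp0, Real.rpow_one]
    have step3 : ((1-p) * (p ^ (-(2*h)) * σ1 ^ (2*h)) = p * ((1-p) ^ (-(2*h)) * σ0 ^ (2*h))) ↔
        ((1-p) * σ1 ^ (2*h/(2*h+1))) ^ (2*h+1) = (p * σ0 ^ (2*h/(2*h+1))) ^ (2*h+1) := by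
      rw [eL, eR, e1, e2, Real.rpow_neg hp0.le, Real.rpow_neg h1p.le]
      constructor
      · intro H
        field_simp at H
        linear_combination H
      · intro H
        field_simp
        linear_combination H
    have step5 : ((1-p) * σ1 ^ (2*h/(2*h+1))) ^ (2*h+1) = (p * σ0 ^ (2*h/(2*h+1))) ^ (2*h+1) ↔
        (1-p) * σ1 ^ (2*h/(2*h+1)) = p * σ0 ^ (2*h/(2*h+1)) :=
      rpow_left_inj' (by positivity) (by positivity) h21
    have step6 : (1-p) * σ1 ^ (2*h/(2*h+1)) = p * σ0 ^ (2*h/(2*h+1)) ↔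
        p = σ1 ^ (2*h/(2*h+1)) / (σ0 ^ (2*h/(2*h+1)) + σ1 ^ (2*h/(2*h+1))) := by
      constructor
      · intro H
        rw [eq_div_iff (by positivity : (0:ℝ) < σ0 ^ (2*h/(2*h+1)) + σ1 ^ (2*h/(2*h+1))).ne']
        linear_combination -H
      · intro H
        rw [H]
        field_simp
        ring
    exact step1.trans (step3.trans (step5.trans step6))
end

section
/- Fix $h > 0$ and a constant $I > 0$ for each of two arms $I_0, I_1 > 0$. The function $G(p) = -p + \frac{I_1^{-h} p^{-2h}}{I_1^{-h} p^{-2h} + I_0^{-h} (1-p)^{-2h}}$ on $(0,1)$ is strictly decreasing and its unique root is $p = I_1^{-h/(2h+1)}/(I_0^{-h/(2h+1)} + I_1^{-h/(2h+1)})$. -/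
theorem stmt_7 (h I0 I1 : ℝ) (hh : 0 < h) (h0 : 0 < I0) (h1 : 0 < I1) :
    StrictAntiOn (fun p : ℝ => -p + I1 ^ (-h) * p ^ (-(2*h)) /
        (I1 ^ (-h) * p ^ (-(2*h)) + I0 ^ (-h) * (1 - p) ^ (-(2*h)))) (Set.Ioo 0 1) ∧
    ∀ p ∈ Set.Ioo (0:ℝ) 1,
      (-p + I1 ^ (-h) * p ^ (-(2*h)) /
          (I1 ^ (-h) * p ^ (-(2*h)) + I0 ^ (-h) * (1 - p) ^ (-(2*h))) = 0 ↔
        p = I1 ^ (-(h/(2*h+1))) / (I0 ^ (-(h/(2*h+1))) + I1 ^ (-(h/(2*h+1))))) := by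
  have h2h1 : (0:ℝ) < 2*h+1 := by linarith
  set c := h/(2*h+1) with hc
  set u := I0 ^ (-c) with hu_def
  set v := I1 ^ (-c) with hv_def
  have hu : 0 < u := Real.rpow_pos_of_pos h0 _
  have hv : 0 < v := Real.rpow_pos_of_pos h1 _
  set A := I1 ^ (-h) with hA_def
  set B := I0 ^ (-h) with hB_def
  have hA : 0 < A := Real.rpow_pos_of_pos h1 _
  have hB : 0 < B := Real.rpow_pos_of_pos h0 _
  set pstar := v/(u+v) with hps_def
  have hps : pstar ∈ Set.Ioo (0:ℝ) 1 :=
    ⟨div_pos hv (by linarith), (div_lt_one (by linarith)).2 (by linarith)⟩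
  -- key rewriting of the fraction
  have key : ∀ p ∈ Set.Ioo (0:ℝ) 1,
      A * p ^ (-(2*h)) / (A * p ^ (-(2*h)) + B * (1-p) ^ (-(2*h)))
        = 1 / (1 + (B/A) * (p/(1-p)) ^ (2*h)) := by
    intro p hp
    obtain ⟨hp0, hp1⟩ := hp
    have h1p : 0 < 1 - p := by linarith
    have ha : 0 < p ^ (2*h) := Real.rpow_pos_of_pos hp0 _
    have hb : 0 < (1-p) ^ (2*h) := Real.rpow_pos_of_pos h1p _
    have e1 : p ^ (-(2*h)) = (p ^ (2*h))⁻¹ := Real.rpow_neg hp0.le _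
    have e2 : (1-p) ^ (-(2*h)) = ((1-p) ^ (2*h))⁻¹ := Real.rpow_neg h1p.le _
    have e3 : (p/(1-p)) ^ (2*h) = p ^ (2*h) / (1-p) ^ (2*h) :=
      Real.div_rpow hp0.le h1p.le _
    rw [e1, e2, e3]
    rw [div_eq_div_iff]
    · field_simp
    · positivity
    · positivity
  have fval : ∀ p ∈ Set.Ioo (0:ℝ) 1,
      -p + A * p ^ (-(2*h)) / (A * p ^ (-(2*h)) + B * (1-p) ^ (-(2*h)))
        = -p + 1 / (1 + (B/A) * (p/(1-p)) ^ (2*h)) := by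
    intro p hp; rw [key p hp]
  have anti : StrictAntiOn (fun p : ℝ => -p + A * p ^ (-(2*h)) /
      (A * p ^ (-(2*h)) + B * (1 - p) ^ (-(2*h)))) (Set.Ioo 0 1) := by
    intro p hp q hq hpq
    simp only []
    rw [fval p hp, fval q hq]
    obtain ⟨hp0, hp1⟩ := hp
    obtain ⟨hq0, hq1⟩ := hq
    have h1p : 0 < 1 - p := by linarith
    have h1q : 0 < 1 - q := by linarith
    have hr : p/(1-p) < q/(1-q) := by
      rw [div_lt_div_iff₀ h1p h1q]; nlinarith
    have hrp : (p/(1-p)) ^ (2*h) < (q/(1-q)) ^ (2*h) :=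
      Real.rpow_lt_rpow (by positivity) hr (by linarith)
    have hC : 0 < B/A := by positivity
    have hden : (0:ℝ) < 1 + (B/A) * (p/(1-p)) ^ (2*h) := by positivity
    have : 1 / (1 + (B/A) * (q/(1-q)) ^ (2*h)) < 1 / (1 + (B/A) * (p/(1-p)) ^ (2*h)) := by
      apply one_div_lt_one_div_of_lt hden
      linarith [(mul_lt_mul_iff_right₀ hC).2 hrp]
    linarith
  -- value at pstar
  have hu1 : u ^ (2*h+1) = B := by
    rw [hu_def, ← Real.rpow_mul h0.le, hB_def]
    congr 1
    rw [hc]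
    field_simp
  have hv1 : v ^ (2*h+1) = A := by
    rw [hv_def, ← Real.rpow_mul h1.le, hA_def]
    congr 1
    rw [hc]
    field_simp
  have h1ps : 1 - pstar = u/(u+v) := by
    rw [hps_def]; field_simp; ring
  have hu2 : u ^ (2*h+1) = u ^ (2*h) * u := by
    rw [Real.rpow_add hu, Real.rpow_one]
  have hv2 : v ^ (2*h+1) = v ^ (2*h) * v := by
    rw [Real.rpow_add hv, Real.rpow_one]
  have hCval : (B/A) * (pstar/(1-pstar)) ^ (2*h) = u/v := by
    have e : pstar/(1-pstar) = v/u := by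
      rw [h1ps, hps_def]
      have : u + v ≠ 0 := by positivity
      field_simp
    rw [e, Real.div_rpow hv.le hu.le, ← hu1, ← hv1, hu2, hv2]
    have hua : (0:ℝ) < u ^ (2*h) := Real.rpow_pos_of_pos hu _
    have hva : (0:ℝ) < v ^ (2*h) := Real.rpow_pos_of_pos hv _
    field_simp
  have fstar : -pstar + A * pstar ^ (-(2*h)) /
      (A * pstar ^ (-(2*h)) + B * (1 - pstar) ^ (-(2*h))) = 0 := by
    rw [fval pstar hps, hCval]
    have : 1 + u/v = (u+v)/v := by field_simp; ring
    rw [this, one_div_div, hps_def]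
    ring
  refine ⟨anti, fun p hp => ⟨fun hfp => ?_, fun hp' => ?_⟩⟩
  · exact anti.injOn hp hps (by simpa using hfp.trans fstar.symm)
  · rw [hp']; exact fstar
end
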